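/- Fix K ≥ 1 and η > 0. Let V₀ = 0, let π₀ be any policy, and let Q₁(x,a) = V₀(x) = 0. For k = 1, …, K define recursively: V_k(x) = (1/η) · log( Σ_a π_{k−1}(a|x) · exp(η Q_k(x,a)) ); π_k(a|x) = π_{k−1}(a|x) · exp( η (Q_k(x,a) − V_k(x)) ); and Q_{k+1}(x,a) = Π_H[ r(x,a) + CB_k(x,a) + γ · Σ_{x'} P̂_k(x'|x,a) V_k(x') ], where Π_H clamps to [0,H], the P̂_k : X × A × X → ℝ are arbitrary estimated models, and the CB_k : X × A → [0,∞) are nonnegative bonuses. Assume the validity condition: for every k ∈ {1,…,K} and every (x,a), |γ · Σ_{x'} (P(x'|x,a) − P̂_k(x'|x,a)) V_k(x')| ≤ CB_k(x,a). Then for any policy π* whose occupancy measure μ* = μ^{π*} maximizes ⟨μ^π, r⟩ over policies π, the following holds: Σ_{k=1}^K ( ⟨μ*, r⟩ − ⟨μ^{π_k}, r⟩ ) ≤ 2 · Σ_{k=1}^K ⟨μ^{π_k}, CB_k⟩ + 2H + (1/η) · H(π* ‖ π₀) + (η H³ K)/2, where ⟨μ, f⟩ = Σ_{x,a} μ(x,a)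 f(x,a). -/

import Mathlib

open scoped ENNReal

/-- The state distribution of the Markov chain induced by policy `π`:
`stateDist P ν₀ π t x = Pr_π[X_t = x]`. -/
noncomputable def stateDist {X A : Type*} [Fintype X] [Fintype A]
    (P : X → A → X → ℝ) (ν₀ : X → ℝ) (π : X → A → ℝ) : ℕ → X → ℝ
  | 0 => ν₀
  | t + 1 => fun x' => ∑ x, ∑ a, stateDist P ν₀ π t x * π x a * P x a x'

/-- The normalized discounted state-action occupancy measure
`μ^π(x,a) = (1−γ) Σ_{t≥0} γ^t Pr_π[X_t = x, A_t = a]`. -/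
noncomputable def occ {X A : Type*} [Fintype X] [Fintype A]
    (γ : ℝ) (P : X → A → X → ℝ) (ν₀ : X → ℝ) (π : X → A → ℝ) (x : X) (a : A) : ℝ :=
  (1 - γ) * ∑' t : ℕ, γ ^ t * stateDist P ν₀ π t x * π x a


namespace RAVI

open Finset

/-- log-sum-exp value. -/
noncomputable def lseV {A : Type*} [Fintype A] (η : ℝ) (p q : A → ℝ) : ℝ :=
  (1 / η) * Real.log (∑ a, p a * Real.exp (η * q a))

/-- exponentially tilted distribution. -/
noncomputable def tiltP {A : Type*} [Fintype A] (η : ℝ) (p q : A → ℝ) : A → ℝ :=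
  fun a => p a * Real.exp (η * (q a - lseV η p q))

open Classical in
/-- real-valued relative entropy (finite sums). -/
noncomputable def klR {A : Type*} [Fintype A] (p q : A → ℝ) : ℝ :=
  ∑ a, if p a = 0 then (0 : ℝ) else p a * Real.log (p a / q a)

section Elem

lemma exp_sub_one_le_mul (x : ℝ) : Real.exp x - 1 ≤ x * Real.exp x := by
  have h := Real.add_one_le_exp (-x)
  have h2 : (1 - x) * Real.exp x ≤ 1 := by
    have := Real.exp_pos x
    calc (1 - x) * Real.exp x ≤ Real.exp (-x) * Real.exp x := by nlinarith
    _ = 1 := by rw [← Real.exp_add]; simp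
  nlinarith

lemma max_exp_sub_one_le (x : ℝ) : max (Real.exp x - 1) 0 ≤ Real.exp x * max x 0 := by
  rcases le_or_gt x 0 with h | h
  · have h1 : Real.exp x ≤ 1 := Real.exp_le_one_iff.mpr h
    have : max x 0 = 0 := max_eq_right h
    rw [this, mul_zero]
    exact max_le (by linarith) le_rfl
  · have : max x 0 = x := max_eq_left h.le
    rw [this]
    exact max_le (by have := exp_sub_one_le_mul x; linarith [mul_comm x (Real.exp x)])
      (by positivity)

lemma max_one_sub_exp_le (x : ℝ) : max (1 - Real.exp x) 0 ≤ max (-x) 0 := by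
  rcases le_or_gt x 0 with h | h
  · have h1 := Real.add_one_le_exp x
    exact max_le (by linarith [le_max_left (-x) (0:ℝ)]) (le_max_right _ _)
  · have h1 : 1 ≤ Real.exp x := Real.one_le_exp h.le
    have : max (1 - Real.exp x) 0 = 0 := max_eq_right (by linarith)
    rw [this]; exact le_max_right _ _

lemma abs_eq_max_add_max (y : ℝ) : |y| = max y 0 + max (-y) 0 := by
  rcases le_or_gt 0 y with h | h
  · rw [abs_of_nonneg h, max_eq_left h, max_eq_right (by linarith)]; ring
  · rw [abs_of_neg h, max_eq_right h.le, max_eq_left (by linarith)]; ring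

/-- pairing: `∑ (p-q) f ≤ ‖p-q‖₁ (U-L)/2` for equal-mass vectors. -/
lemma pairing {S : Type*} [Fintype S] (p q f : S → ℝ) (L U : ℝ)
    (hm : ∑ s, p s = ∑ s, q s) (hf : ∀ s, L ≤ f s ∧ f s ≤ U) :
    ∑ s, (p s - q s) * f s ≤ (∑ s, |p s - q s|) * ((U - L) / 2) := by
  have key : ∑ s, (p s - q s) * f s = ∑ s, (p s - q s) * (f s - (L + U) / 2) := by
    rw [← sub_eq_zero]
    rw [← Finset.sum_sub_distrib]
    have : ∀ s ∈ Finset.univ, (p s - q s) * f s - (p s - q s) * (f s - (L+U)/2)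
        = (p s - q s) * ((L+U)/2) := by intro s _; ring
    rw [Finset.sum_congr rfl this, ← Finset.sum_mul, Finset.sum_sub_distrib, hm]
    ring
  rw [key, Finset.sum_mul]
  apply Finset.sum_le_sum
  intro s _
  calc (p s - q s) * (f s - (L + U) / 2) ≤ |(p s - q s) * (f s - (L + U) / 2)| := le_abs_self _
  _ = |p s - q s| * |f s - (L + U) / 2| := abs_mul _ _
  _ ≤ |p s - q s| * ((U - L) / 2) := by
      apply mul_le_mul_of_nonneg_left _ (abs_nonneg _)
      rw [abs_le]; constructor <;> [linarith [(hf s).1]; linarith [(hf s).2]]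

end Elem


section Core
variable {A : Type*} [Fintype A] (η Hh : ℝ) (p q : A → ℝ)
variable (hη : 0 < η) (hH : 0 ≤ Hh) (hp0 : ∀ a, 0 ≤ p a) (hp1 : ∑ a, p a = 1)
  (hq0 : ∀ a, 0 ≤ q a) (hqH : ∀ a, q a ≤ Hh)

include hη hp0 hp1 hq0 in
lemma Z_one_le : 1 ≤ ∑ a, p a * Real.exp (η * q a) := by
  calc (1:ℝ) = ∑ a, p a := hp1.symm
  _ ≤ ∑ a, p a * Real.exp (η * q a) := by
      apply Finset.sum_le_sum; intro a _
      nth_rewrite 1 [← mul_one (p a)]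
      exact mul_le_mul_of_nonneg_left
        (Real.one_le_exp (mul_nonneg hη.le (hq0 a))) (hp0 a)

include hη hp0 hp1 hqH in
lemma Z_le_exp : ∑ a, p a * Real.exp (η * q a) ≤ Real.exp (η * Hh) := by
  calc ∑ a, p a * Real.exp (η * q a) ≤ ∑ a, p a * Real.exp (η * Hh) := by
        apply Finset.sum_le_sum; intro a _
        exact mul_le_mul_of_nonneg_left
          (Real.exp_le_exp.mpr (by nlinarith [hqH a])) (hp0 a)
  _ = Real.exp (η * Hh) := by rw [← Finset.sum_mul, hp1, one_mul]

include hη hp0 hp1 hq0 in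
lemma lseV_nonneg : 0 ≤ lseV η p q := by
  have h1 := Z_one_le η p q hη hp0 hp1 hq0
  have : 0 ≤ Real.log (∑ a, p a * Real.exp (η * q a)) := Real.log_nonneg h1
  unfold lseV; positivity

include hη hH hp0 hp1 hq0 hqH in
lemma lseV_le : lseV η p q ≤ Hh := by
  have h1 := Z_one_le η p q hη hp0 hp1 hq0
  have h2 := Z_le_exp η Hh p q hη hp0 hp1 hqH
  have : Real.log (∑ a, p a * Real.exp (η * q a)) ≤ η * Hh := by
    calc Real.log (∑ a, p a * Real.exp (η * q a)) ≤ Real.log (Real.exp (η * Hh)) :=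
          Real.log_le_log (by linarith) h2
    _ = η * Hh := Real.log_exp _
  rw [lseV, div_mul_eq_mul_div, one_mul, div_le_iff₀ hη, mul_comm Hh η]
  exact this

include hη hp0 hp1 hq0 in
lemma exp_eta_lseV : Real.exp (η * lseV η p q) = ∑ a, p a * Real.exp (η * q a) := by
  have h1 := Z_one_le η p q hη hp0 hp1 hq0
  rw [lseV]
  rw [show η * ((1/η) * Real.log (∑ a, p a * Real.exp (η * q a)))
      = Real.log (∑ a, p a * Real.exp (η * q a)) by field_simp]
  exact Real.exp_log (by linarith)

lemma tiltP_nonneg (hp0 : ∀ a, 0 ≤ p a) (a : A) : 0 ≤ tiltP η p q a :=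
  mul_nonneg (hp0 a) (Real.exp_pos _).le

lemma tiltP_eq_zero_iff (hp0 : ∀ a, 0 ≤ p a) (a : A) : tiltP η p q a = 0 ↔ p a = 0 := by
  unfold tiltP
  constructor
  · intro h
    rcases mul_eq_zero.mp h with h | h
    · exact h
    · exact absurd h (Real.exp_ne_zero _)
  · intro h; rw [h, zero_mul]

include hη hp0 hp1 hq0 in
lemma tiltP_sum : ∑ a, tiltP η p q a = 1 := by
  have hz := exp_eta_lseV η p q hη hp0 hp1 hq0
  have h1 := Z_one_le η p q hη hp0 hp1 hq0
  have : ∀ a ∈ Finset.univ, tiltP η p q a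
      = (p a * Real.exp (η * q a)) / Real.exp (η * lseV η p q) := by
    intro a _
    rw [tiltP]
    rw [mul_sub, Real.exp_sub, mul_div_assoc]
  rw [Finset.sum_congr rfl this, ← Finset.sum_div, ← hz, div_self (Real.exp_ne_zero _)]

end Core

section Core2
variable {A : Type*} [Fintype A] (η Hh : ℝ) (p q : A → ℝ)
variable (hη : 0 < η) (hH : 0 ≤ Hh) (hp0 : ∀ a, 0 ≤ p a) (hp1 : ∑ a, p a = 1)
  (hq0 : ∀ a, 0 ≤ q a) (hqH : ∀ a, q a ≤ Hh)

include hη hH hp0 hp1 hq0 hqH in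
lemma tiltP_l1 : ∑ a, |tiltP η p q a - p a| ≤ η * Hh := by
  set v := lseV η p q with hv
  have hv0 : 0 ≤ v := lseV_nonneg η p q hη hp0 hp1 hq0
  have hvH : v ≤ Hh := lseV_le η Hh p q hη hH hp0 hp1 hq0 hqH
  have hsum1 : ∑ a, p a * Real.exp (η * (q a - v)) = 1 := tiltP_sum η p q hη hp0 hp1 hq0
  have habs : ∀ a ∈ Finset.univ, |tiltP η p q a - p a|
      = p a * max (Real.exp (η * (q a - v)) - 1) 0
        + p a * max (1 - Real.exp (η * (q a - v))) 0 := by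
    intro a _
    have : tiltP η p q a - p a = p a * (Real.exp (η * (q a - v)) - 1) := by
      unfold tiltP; rw [← hv]; ring
    rw [this, abs_mul, abs_of_nonneg (hp0 a),
      abs_eq_max_add_max (Real.exp (η * (q a - v)) - 1)]
    have : -(Real.exp (η * (q a - v)) - 1) = 1 - Real.exp (η * (q a - v)) := by ring
    rw [this, mul_add]
  rw [Finset.sum_congr rfl habs, Finset.sum_add_distrib]
  have hTp : ∑ a, p a * max (Real.exp (η * (q a - v)) - 1) 0 ≤ η * (Hh - v) := by
    calc ∑ a, p a * max (Real.exp (η * (q a - v)) - 1) 0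
        ≤ ∑ a, p a * Real.exp (η * (q a - v)) * (η * (Hh - v)) := by
          apply Finset.sum_le_sum; intro a _
          have h1 := max_exp_sub_one_le (η * (q a - v))
          have h2 : Real.exp (η * (q a - v)) * max (η * (q a - v)) 0
              ≤ Real.exp (η * (q a - v)) * (η * (Hh - v)) := by
            apply mul_le_mul_of_nonneg_left _ (Real.exp_pos _).le
            apply max_le _ (by nlinarith [hqH a])
            have := hqH a; nlinarith
          calc p a * max (Real.exp (η * (q a - v)) - 1) 0
              ≤ p a * (Real.exp (η * (q a - v)) * (η * (Hh - v))) := by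
                apply mul_le_mul_of_nonneg_left _ (hp0 a); exact le_trans h1 h2
          _ = p a * Real.exp (η * (q a - v)) * (η * (Hh - v)) := by ring
    _ = η * (Hh - v) := by rw [← Finset.sum_mul, hsum1, one_mul]
  have hTn : ∑ a, p a * max (1 - Real.exp (η * (q a - v))) 0 ≤ η * v := by
    calc ∑ a, p a * max (1 - Real.exp (η * (q a - v))) 0
        ≤ ∑ a, p a * (η * v) := by
          apply Finset.sum_le_sum; intro a _
          apply mul_le_mul_of_nonneg_left _ (hp0 a)
          refine le_trans (max_one_sub_exp_le _) (max_le ?_ (by positivity))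
          have := hq0 a; nlinarith
    _ = η * v := by rw [← Finset.sum_mul, hp1, one_mul]
  linarith

include hη hH hp0 hp1 hq0 hqH in
lemma lseV_slack : lseV η p q - ∑ a, p a * q a ≤ η * Hh ^ 2 / 2 := by
  set v := lseV η p q with hv
  have hv0 : 0 ≤ v := lseV_nonneg η p q hη hp0 hp1 hq0
  have hvH : v ≤ Hh := lseV_le η Hh p q hη hH hp0 hp1 hq0 hqH
  have hsum1 : ∑ a, p a * Real.exp (η * (q a - v)) = 1 := tiltP_sum η p q hη hp0 hp1 hq0
  have hT : ∑ a, |tiltP η p q a - p a| ≤ η * Hh := tiltP_l1 η Hh p q hη hH hp0 hp1 hq0 hqH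
  have htsum : ∑ a, tiltP η p q a = 1 := tiltP_sum η p q hη hp0 hp1 hq0
  -- 0 ≤ ∑ tilt * m
  have hup : 0 ≤ ∑ a, tiltP η p q a * (q a - v) := by
    have : ∑ a, (p a * (Real.exp (η * (q a - v)) - 1)) ≤ ∑ a, p a * (η * (q a - v) * Real.exp (η * (q a - v))) := by
      apply Finset.sum_le_sum; intro a _
      exact mul_le_mul_of_nonneg_left (exp_sub_one_le_mul _) (hp0 a)
    have hz : ∑ a, (p a * (Real.exp (η * (q a - v)) - 1)) = 0 := by
      have : ∀ a ∈ Finset.univ, p a * (Real.exp (η * (q a - v)) - 1)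
          = p a * Real.exp (η * (q a - v)) - p a := by intro a _; ring
      rw [Finset.sum_congr rfl this, Finset.sum_sub_distrib, hsum1, hp1, sub_self]
    have he : ∑ a, p a * (η * (q a - v) * Real.exp (η * (q a - v)))
        = η * ∑ a, tiltP η p q a * (q a - v) := by
      rw [Finset.mul_sum]
      apply Finset.sum_congr rfl; intro a _; unfold tiltP; ring
    nlinarith
  -- main bound
  have hmain : ∑ a, (tiltP η p q a - p a) * (q a - v)
      ≤ (∑ a, |tiltP η p q a - p a|) * ((Hh - v - (-v)) / 2) := by
    apply pairing (tiltP η p q) p (fun a => q a - v) (-v) (Hh - v)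
      (by rw [htsum, hp1]) (fun a => ⟨by show -v ≤ q a - v; have := hq0 a; linarith, by show q a - v ≤ Hh - v; have := hqH a; linarith⟩)
  have hexp : ∑ a, (tiltP η p q a - p a) * (q a - v)
      = ∑ a, tiltP η p q a * (q a - v) - (∑ a, p a * q a - v) := by
    rw [show ∑ a, p a * q a - v = ∑ a, p a * (q a - v) by
      rw [← sub_zero (∑ a, p a * q a)]
      have : ∀ a ∈ Finset.univ, p a * (q a - v) = p a * q a - p a * v := by intro a _; ring
      rw [Finset.sum_congr rfl this, Finset.sum_sub_distrib, ← Finset.sum_mul, hp1, one_mul]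
      ring]
    rw [← Finset.sum_sub_distrib]
    apply Finset.sum_congr rfl; intro a _; ring
  have hfin : (∑ a, |tiltP η p q a - p a|) * ((Hh - v - (-v)) / 2) ≤ η * Hh * (Hh / 2) := by
    have h2 : (Hh - v - (-v)) / 2 = Hh / 2 := by ring
    rw [h2]
    apply mul_le_mul_of_nonneg_right hT (by positivity)
  nlinarith [hup]

end Core2

section KL
open Classical
variable {A : Type*} [Fintype A]

lemma klR_nonneg (p q : A → ℝ) (hp0 : ∀ a, 0 ≤ p a) (hp1 : ∑ a, p a = 1)
    (hq0 : ∀ a, 0 ≤ q a) (hq1 : ∑ a, q a ≤ 1) (hac : ∀ a, q a = 0 → p a = 0) :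
    0 ≤ klR p q := by
  have key : ∀ a ∈ Finset.univ, p a - (if p a = 0 then (0:ℝ) else q a)
      ≤ (if p a = 0 then (0 : ℝ) else p a * Real.log (p a / q a)) := by
    intro a _
    by_cases h : p a = 0
    · simp [h]
    · rw [if_neg h, if_neg h]
      have hpa : 0 < p a := lt_of_le_of_ne (hp0 a) (Ne.symm h)
      have hqa : 0 < q a := by
        rcases lt_or_eq_of_le (hq0 a) with h' | h'
        · exact h'
        · exact absurd (hac a h'.symm) h
      have hlog : Real.log (q a / p a) ≤ q a / p a - 1 :=
        Real.log_le_sub_one_of_pos (by positivity)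
      have hrw : Real.log (p a / q a) = -Real.log (q a / p a) := by
        rw [← Real.log_inv]; congr 1; rw [inv_div]
      rw [hrw]
      have : p a * (1 - q a / p a) ≤ p a * (-Real.log (q a / p a)) := by
        apply mul_le_mul_of_nonneg_left _ (hp0 a); linarith
      calc p a - q a ≤ p a * (1 - q a / p a) := by field_simp; exact le_rfl
      _ ≤ _ := this
  have hsum := Finset.sum_le_sum key
  rw [Finset.sum_sub_distrib, hp1] at hsum
  have : ∑ a, (if p a = 0 then (0:ℝ) else q a) ≤ 1 := by
    refine le_trans (Finset.sum_le_sum ?_) hq1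
    intro a _; by_cases h : p a = 0 <;> simp [h, hq0 a]
  unfold klR; linarith

lemma md_identity (η : ℝ) (hη : 0 < η) (p ps q : A → ℝ)
    (hp0 : ∀ a, 0 ≤ p a) (hps1 : ∑ a, ps a = 1)
    (hac : ∀ a, p a = 0 → ps a = 0) :
    (∑ a, ps a * q a) - lseV η p q
      = (1 / η) * (klR ps p - klR ps (tiltP η p q)) := by
  set v := lseV η p q with hv
  have key : klR ps p - klR ps (tiltP η p q) = η * ((∑ a, ps a * q a) - v) := by
    unfold klR
    rw [← Finset.sum_sub_distrib]
    have hterm : ∀ a ∈ Finset.univ,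
        ((if ps a = 0 then (0:ℝ) else ps a * Real.log (ps a / p a))
          - (if ps a = 0 then (0:ℝ) else ps a * Real.log (ps a / tiltP η p q a)))
        = ps a * (η * (q a - v)) := by
      intro a _
      by_cases h : ps a = 0
      · simp [h]
      · rw [if_neg h, if_neg h]
        have hpa : p a ≠ 0 := fun hz => h (hac a hz)
        have hppos : 0 < p a := lt_of_le_of_ne (hp0 a) (Ne.symm hpa)
        have htp : tiltP η p q a = p a * Real.exp (η * (q a - v)) := rfl
        have htpos : (0:ℝ) < tiltP η p q a := by rw [htp]; positivity
        have hpspos : ps a ≠ 0 := h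
        rw [← mul_sub]
        congr 1
        rw [Real.log_div hpspos hpa, Real.log_div hpspos (ne_of_gt htpos), htp,
          Real.log_mul (ne_of_gt hppos) (Real.exp_ne_zero _), Real.log_exp]
        ring
    rw [Finset.sum_congr rfl hterm]
    have : ∀ a ∈ Finset.univ, ps a * (η * (q a - v)) = η * (ps a * q a) - η * v * ps a := by
      intro a _; ring
    rw [Finset.sum_congr rfl this, Finset.sum_sub_distrib, ← Finset.mul_sum,
      ← Finset.mul_sum, hps1]
    ring
  rw [key]; field_simp

end KL

end RAVI

namespace RAVI

noncomputable def sOcc {X A : Type*} [Fintype X] [Fintype A]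
    (γ : ℝ) (P : X → A → X → ℝ) (ν₀ : X → ℝ) (π : X → A → ℝ) (x : X) : ℝ :=
  (1 - γ) * ∑' t : ℕ, γ ^ t * stateDist P ν₀ π t x

section MDP
variable {X A : Type*} [Fintype X] [Fintype A]
variable (γ : ℝ) (P : X → A → X → ℝ) (ν₀ : X → ℝ) (ρ : X → A → ℝ)
variable (hγ0 : 0 < γ) (hγ1 : γ < 1)
  (hP0 : ∀ x a x', 0 ≤ P x a x') (hP1 : ∀ x a, ∑ x', P x a x' = 1)
  (hν0 : ∀ x, 0 ≤ ν₀ x) (hν1 : ∑ x, ν₀ x = 1)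
  (hρ0 : ∀ x a, 0 ≤ ρ x a) (hρ1 : ∀ x, ∑ a, ρ x a = 1)

include hP0 hν0 hρ0 in
lemma sd_nonneg : ∀ t x, 0 ≤ stateDist P ν₀ ρ t x := by
  intro t
  induction t with
  | zero => exact hν0
  | succ n ih =>
    intro x'
    apply Finset.sum_nonneg; intro x _
    apply Finset.sum_nonneg; intro a _
    have := ih x
    have := hρ0 x a
    have := hP0 x a x'
    positivity

include hP0 hP1 hν0 hν1 hρ0 hρ1 in
lemma sd_sum : ∀ t, ∑ x, stateDist P ν₀ ρ t x = 1 := by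
  intro t
  induction t with
  | zero => exact hν1
  | succ n ih =>
    show ∑ x', ∑ x, ∑ a, stateDist P ν₀ ρ n x * ρ x a * P x a x' = 1
    rw [Finset.sum_comm]
    have : ∀ x ∈ Finset.univ, ∑ x', ∑ a, stateDist P ν₀ ρ n x * ρ x a * P x a x'
        = stateDist P ν₀ ρ n x := by
      intro x _
      rw [Finset.sum_comm]
      have h1 : ∀ a ∈ Finset.univ, ∑ x', stateDist P ν₀ ρ n x * ρ x a * P x a x'
          = stateDist P ν₀ ρ n x * ρ x a := by
        intro a _
        rw [← Finset.mul_sum, hP1, mul_one]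
      rw [Finset.sum_congr rfl h1, ← Finset.mul_sum, hρ1, mul_one]
    rw [Finset.sum_congr rfl this, ih]

include hP0 hP1 hν0 hν1 hρ0 hρ1 in
lemma sd_le_one : ∀ t x, stateDist P ν₀ ρ t x ≤ 1 := by
  intro t x
  have h := sd_sum P ν₀ ρ hP0 hP1 hν0 hν1 hρ0 hρ1 t
  rw [← h]
  exact Finset.single_le_sum (fun y _ => sd_nonneg P ν₀ ρ hP0 hν0 hρ0 t y) (Finset.mem_univ x)

include hγ0 hγ1 hP0 hP1 hν0 hν1 hρ0 hρ1 in
lemma summable_sd (x : X) : Summable (fun t => γ ^ t * stateDist P ν₀ ρ t x) := by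
  apply Summable.of_nonneg_of_le
    (fun t => mul_nonneg (pow_nonneg hγ0.le t) (sd_nonneg P ν₀ ρ hP0 hν0 hρ0 t x))
    (fun t => ?_)
    (summable_geometric_of_lt_one hγ0.le hγ1)
  calc γ ^ t * stateDist P ν₀ ρ t x ≤ γ ^ t * 1 :=
        mul_le_mul_of_nonneg_left (sd_le_one P ν₀ ρ hP0 hP1 hν0 hν1 hρ0 hρ1 t x)
          (pow_nonneg hγ0.le t)
  _ = γ ^ t := mul_one _

lemma occ_factor (x : X) (a : A) :
    occ γ P ν₀ ρ x a = sOcc γ P ν₀ ρ x * ρ x a := by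
  unfold occ sOcc
  rw [mul_assoc]
  congr 1
  rw [← tsum_mul_right]

include hγ0 hγ1 hP0 hν0 hρ0 in
lemma sOcc_nonneg (x : X) : 0 ≤ sOcc γ P ν₀ ρ x := by
  unfold sOcc
  apply mul_nonneg (by linarith)
  apply tsum_nonneg
  intro t
  exact mul_nonneg (pow_nonneg hγ0.le t) (sd_nonneg P ν₀ ρ hP0 hν0 hρ0 t x)

include hγ0 hγ1 hP0 hP1 hν0 hν1 hρ0 hρ1 in
lemma sOcc_sum : ∑ x, sOcc γ P ν₀ ρ x = 1 := by
  unfold sOcc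
  rw [← Finset.mul_sum]
  rw [← Summable.tsum_finsetSum (fun (x : X) _ => summable_sd γ P ν₀ ρ hγ0 hγ1 hP0 hP1 hν0 hν1 hρ0 hρ1 x)]
  have : ∀ (t : ℕ), ∑ x, γ ^ t * stateDist P ν₀ ρ t x = γ ^ t := by
    intro t
    rw [← Finset.mul_sum, sd_sum P ν₀ ρ hP0 hP1 hν0 hν1 hρ0 hρ1 t, mul_one]
  rw [tsum_congr this, tsum_geometric_of_lt_one hγ0.le hγ1]
  exact mul_inv_cancel₀ (by linarith : (1:ℝ) - γ ≠ 0)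

end MDP
end RAVI

namespace RAVI
section Flow
variable {X A : Type*} [Fintype X] [Fintype A]
variable (γ : ℝ) (P : X → A → X → ℝ) (ν₀ : X → ℝ) (ρ : X → A → ℝ)
variable (hγ0 : 0 < γ) (hγ1 : γ < 1)
  (hP0 : ∀ x a x', 0 ≤ P x a x') (hP1 : ∀ x a, ∑ x', P x a x' = 1)
  (hν0 : ∀ x, 0 ≤ ν₀ x) (hν1 : ∑ x, ν₀ x = 1)
  (hρ0 : ∀ x a, 0 ≤ ρ x a) (hρ1 : ∀ x, ∑ a, ρ x a = 1)

include hγ0 hγ1 hP0 hP1 hν0 hν1 hρ0 hρ1 in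
lemma sOcc_flow (x' : X) : sOcc γ P ν₀ ρ x'
    = (1 - γ) * ν₀ x' + γ * ∑ x, ∑ a, sOcc γ P ν₀ ρ x * ρ x a * P x a x' := by
  have hs : ∀ x, Summable (fun t => γ ^ t * stateDist P ν₀ ρ t x) :=
    fun x => summable_sd γ P ν₀ ρ hγ0 hγ1 hP0 hP1 hν0 hν1 hρ0 hρ1 x
  have h1 : (fun t => γ ^ (t+1) * stateDist P ν₀ ρ (t+1) x')
      = fun t => ∑ x, ∑ a, (γ ^ t * stateDist P ν₀ ρ t x) * (ρ x a * (γ * P x a x')) := by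
    funext t
    show γ ^ (t+1) * (∑ x, ∑ a, stateDist P ν₀ ρ t x * ρ x a * P x a x') = _
    rw [Finset.mul_sum]
    refine Finset.sum_congr rfl fun x _ => ?_
    rw [Finset.mul_sum]
    refine Finset.sum_congr rfl fun a _ => ?_
    ring
  have h2 : ∑' t, γ ^ (t+1) * stateDist P ν₀ ρ (t+1) x'
      = ∑ x, ∑ a, (∑' t, γ ^ t * stateDist P ν₀ ρ t x) * (ρ x a * (γ * P x a x')) := by
    rw [h1]
    rw [Summable.tsum_finsetSum (f := fun (x : X) t => ∑ a, (γ ^ t * stateDist P ν₀ ρ t x) * (ρ x a * (γ * P x a x')))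
      (fun x _ => summable_sum (fun a _ => (hs x).mul_right _))]
    refine Finset.sum_congr rfl fun x _ => ?_
    rw [Summable.tsum_finsetSum (fun a _ => (hs x).mul_right _)]
    refine Finset.sum_congr rfl fun a _ => ?_
    exact tsum_mul_right
  show (1-γ) * ∑' t, γ ^ t * stateDist P ν₀ ρ t x' = _
  rw [Summable.tsum_eq_zero_add (hs x')]
  have h0 : γ ^ 0 * stateDist P ν₀ ρ 0 x' = ν₀ x' := by simp [stateDist]
  rw [h0, mul_add, h2]
  congr 1
  rw [Finset.mul_sum, Finset.mul_sum]
  refine Finset.sum_congr rfl fun x _ => ?_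
  rw [Finset.mul_sum, Finset.mul_sum]
  refine Finset.sum_congr rfl fun a _ => ?_
  unfold sOcc; ring

include hγ0 hγ1 hP0 hP1 hν0 hν1 hρ0 hρ1 in
lemma sOcc_flowF (f : X → ℝ) :
    γ * ∑ x, ∑ a, sOcc γ P ν₀ ρ x * ρ x a * (∑ x', P x a x' * f x')
      = ∑ x, sOcc γ P ν₀ ρ x * f x - (1 - γ) * ∑ x, ν₀ x * f x := by
  have l1 : γ * ∑ x, ∑ a, sOcc γ P ν₀ ρ x * ρ x a * (∑ x', P x a x' * f x')
      = ∑ x, ∑ a, ∑ x', γ * (sOcc γ P ν₀ ρ x * ρ x a * (P x a x' * f x')) := by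
    rw [Finset.mul_sum]
    refine Finset.sum_congr rfl fun x _ => ?_
    rw [Finset.mul_sum]
    refine Finset.sum_congr rfl fun a _ => ?_
    rw [Finset.mul_sum, Finset.mul_sum]
  have l2 : ∑ x, ∑ a, ∑ x', γ * (sOcc γ P ν₀ ρ x * ρ x a * (P x a x' * f x'))
      = ∑ x', ∑ x, ∑ a, γ * (sOcc γ P ν₀ ρ x * ρ x a * (P x a x' * f x')) := by
    rw [show (∑ x, ∑ a, ∑ x', γ * (sOcc γ P ν₀ ρ x * ρ x a * (P x a x' * f x')))
        = ∑ x, ∑ x', ∑ a, γ * (sOcc γ P ν₀ ρ x * ρ x a * (P x a x' * f x')) from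
      Finset.sum_congr rfl fun x _ => Finset.sum_comm]
    exact Finset.sum_comm
  have l3 : ∑ x, sOcc γ P ν₀ ρ x * f x
      = (1 - γ) * ∑ x, ν₀ x * f x
        + ∑ x', ∑ x, ∑ a, γ * (sOcc γ P ν₀ ρ x * ρ x a * (P x a x' * f x')) := by
    have e1 : ∀ x' ∈ Finset.univ, sOcc γ P ν₀ ρ x' * f x'
        = (1 - γ) * (ν₀ x' * f x')
          + ∑ x, ∑ a, γ * (sOcc γ P ν₀ ρ x * ρ x a * (P x a x' * f x')) := by
      intro x' _
      rw [sOcc_flow γ P ν₀ ρ hγ0 hγ1 hP0 hP1 hν0 hν1 hρ0 hρ1 x', add_mul]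
      congr 1
      · ring
      · rw [Finset.mul_sum, Finset.sum_mul]
        refine Finset.sum_congr rfl fun x _ => ?_
        rw [Finset.mul_sum, Finset.sum_mul]
        refine Finset.sum_congr rfl fun a _ => ?_
        ring
    rw [Finset.sum_congr rfl e1, Finset.sum_add_distrib, ← Finset.mul_sum]
  rw [l1, l2]; linarith [l3]

end Flow
end RAVI

namespace RAVI
section Perturb
variable {X A : Type*} [Fintype X] [Fintype A]
variable (γ : ℝ) (P : X → A → X → ℝ) (ν₀ : X → ℝ) (ρ ρ' : X → A → ℝ)
variable (hγ0 : 0 < γ) (hγ1 : γ < 1)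
  (hP0 : ∀ x a x', 0 ≤ P x a x') (hP1 : ∀ x a, ∑ x', P x a x' = 1)
  (hν0 : ∀ x, 0 ≤ ν₀ x) (hν1 : ∑ x, ν₀ x = 1)
  (hρ0 : ∀ x a, 0 ≤ ρ x a) (hρ1 : ∀ x, ∑ a, ρ x a = 1)
  (hρ0' : ∀ x a, 0 ≤ ρ' x a) (hρ1' : ∀ x, ∑ a, ρ' x a = 1)

include hγ0 hγ1 hP0 hP1 hν0 hν1 hρ0 hρ1 hρ0' hρ1' in
lemma sOcc_perturb (c : ℝ) (hc : ∀ x, ∑ a, |ρ' x a - ρ x a| ≤ c) :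
    ∑ x, |sOcc γ P ν₀ ρ' x - sOcc γ P ν₀ ρ x| ≤ γ * c / (1 - γ) := by
  set s := sOcc γ P ν₀ ρ with hsdef
  set s' := sOcc γ P ν₀ ρ' with hsdef'
  have hs0 : ∀ x, 0 ≤ s x := fun x => sOcc_nonneg γ P ν₀ ρ hγ0 hγ1 hP0 hν0 hρ0 x
  have hssum : ∑ x, s x = 1 := sOcc_sum γ P ν₀ ρ hγ0 hγ1 hP0 hP1 hν0 hν1 hρ0 hρ1
  have habs : ∀ x', |s' x' - s x'|
      ≤ ∑ x, ∑ a, γ * ((|s' x - s x| * ρ' x a + s x * |ρ' x a - ρ x a|) * P x a x') := by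
    intro x'
    have hdiff : s' x' - s x'
        = ∑ x, ∑ a, γ * (((s' x - s x) * ρ' x a + s x * (ρ' x a - ρ x a)) * P x a x') := by
      rw [hsdef, hsdef',
        sOcc_flow γ P ν₀ ρ' hγ0 hγ1 hP0 hP1 hν0 hν1 hρ0' hρ1' x',
        sOcc_flow γ P ν₀ ρ hγ0 hγ1 hP0 hP1 hν0 hν1 hρ0 hρ1 x']
      rw [Finset.mul_sum, Finset.mul_sum, ← hsdef, ← hsdef']
      have : ∀ z : X, ∀ w ∈ Finset.univ, γ * (((s' z - s z) * ρ' z w + s z * (ρ' z w - ρ z w)) * P z w x')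
          = γ * (s' z * ρ' z w * P z w x') - γ * (s z * ρ z w * P z w x') := by
        intro z w _; ring
      have hterm : ∀ z ∈ Finset.univ, ∑ a, γ * (((s' z - s z) * ρ' z a + s z * (ρ' z a - ρ z a)) * P z a x')
          = (∑ a, γ * (s' z * ρ' z a * P z a x')) - ∑ a, γ * (s z * ρ z a * P z a x') := by
        intro z _
        rw [← Finset.sum_sub_distrib]
        exact Finset.sum_congr rfl (this z)
      rw [Finset.sum_congr rfl hterm, Finset.sum_sub_distrib]
      simp only [Finset.mul_sum]
      ring
    rw [hdiff]
    refine le_trans (Finset.abs_sum_le_sum_abs _ _) (Finset.sum_le_sum fun x _ => ?_)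
    refine le_trans (Finset.abs_sum_le_sum_abs _ _) (Finset.sum_le_sum fun a _ => ?_)
    rw [abs_mul, abs_of_nonneg hγ0.le, abs_mul, abs_of_nonneg (hP0 x a x')]
    apply mul_le_mul_of_nonneg_left _ hγ0.le
    apply mul_le_mul_of_nonneg_right _ (hP0 x a x')
    refine le_trans (abs_add_le _ _) ?_
    rw [abs_mul, abs_mul, abs_of_nonneg (hρ0' x a), abs_of_nonneg (hs0 x)]
  have hsum : ∑ x', |s' x' - s x'|
      ≤ γ * ((∑ x, |s' x - s x|) + c) := by
    calc ∑ x', |s' x' - s x'|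
        ≤ ∑ x', ∑ x, ∑ a, γ * ((|s' x - s x| * ρ' x a + s x * |ρ' x a - ρ x a|) * P x a x') :=
          Finset.sum_le_sum fun x' _ => habs x'
    _ = ∑ x, ∑ a, γ * ((|s' x - s x| * ρ' x a + s x * |ρ' x a - ρ x a|) * (∑ x', P x a x')) := by
          rw [Finset.sum_comm]
          refine Finset.sum_congr rfl fun x _ => ?_
          rw [Finset.sum_comm]
          refine Finset.sum_congr rfl fun a _ => ?_
          rw [Finset.mul_sum, Finset.mul_sum]
    _ = ∑ x, ∑ a, γ * (|s' x - s x| * ρ' x a + s x * |ρ' x a - ρ x a|) := by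
          refine Finset.sum_congr rfl fun x _ => Finset.sum_congr rfl fun a _ => ?_
          rw [hP1 x a, mul_one]
    _ ≤ γ * ((∑ x, |s' x - s x|) + c) := by
          have hx : ∀ x ∈ Finset.univ, ∑ a, γ * (|s' x - s x| * ρ' x a + s x * |ρ' x a - ρ x a|)
              = γ * (|s' x - s x| + s x * (∑ a, |ρ' x a - ρ x a|)) := by
            intro x _
            have e : ∀ a ∈ Finset.univ, γ * (|s' x - s x| * ρ' x a + s x * |ρ' x a - ρ x a|)
                = (γ * |s' x - s x|) * ρ' x a + (γ * s x) * |ρ' x a - ρ x a| := fun a _ => by ring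
            rw [Finset.sum_congr rfl e, Finset.sum_add_distrib, ← Finset.mul_sum,
              ← Finset.mul_sum, hρ1' x]
            ring
          rw [Finset.sum_congr rfl hx]
          have step1 : ∑ x, γ * (|s' x - s x| + s x * (∑ a, |ρ' x a - ρ x a|))
              ≤ ∑ x, γ * (|s' x - s x| + s x * c) := by
            refine Finset.sum_le_sum fun x _ => mul_le_mul_of_nonneg_left ?_ hγ0.le
            exact add_le_add_right (mul_le_mul_of_nonneg_left (hc x) (hs0 x)) _
          refine le_trans step1 (le_of_eq ?_)
          have e2 : ∀ x ∈ Finset.univ, γ * (|s' x - s x| + s x * c)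
              = γ * |s' x - s x| + (γ * c) * s x := fun x _ => by ring
          rw [Finset.sum_congr rfl e2, Finset.sum_add_distrib, ← Finset.mul_sum,
            ← Finset.mul_sum, hssum]
          ring
  rw [le_div_iff₀ (by linarith : (0:ℝ) < 1 - γ)]
  nlinarith [hsum]

end Perturb
end RAVI

namespace RAVI
open Finset

lemma sum_Icc_telescope (f : ℕ → ℝ) : ∀ K : ℕ, ∑ k ∈ Finset.Icc 1 K, (f k - f (k+1)) = f 1 - f (K+1)
  | 0 => by simp
  | K+1 => by
      rw [Finset.sum_Icc_succ_top (by omega : 1 ≤ K + 1), sum_Icc_telescope f K]; ring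

lemma sum_Icc_telescope' (f : ℕ → ℝ) : ∀ K : ℕ, ∑ k ∈ Finset.Icc 1 K, (f (k+1) - f k) = f (K+1) - f 1
  | 0 => by simp
  | K+1 => by
      rw [Finset.sum_Icc_succ_top (by omega : 1 ≤ K + 1), sum_Icc_telescope' f K]; ring

lemma sum_Icc_shift (g h : ℕ → ℝ) : ∀ n : ℕ, ∑ k ∈ Finset.Icc 1 (n+1), (g k - h k)
    = g 1 - h (n+1) + ∑ k ∈ Finset.Icc 1 n, (g (k+1) - h k)
  | 0 => by simp
  | n+1 => by
      rw [Finset.sum_Icc_succ_top (by omega : 1 ≤ n + 2), sum_Icc_shift g h n,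
        Finset.sum_Icc_succ_top (by omega : 1 ≤ n + 1)]
      ring

lemma klR_congr {A : Type*} [Fintype A] (p q q' : A → ℝ) (h : ∀ a, q a = q' a) :
    klR p q = klR p q' := by
  unfold klR
  exact Finset.sum_congr rfl fun a _ => by rw [h a]

section OccAux
variable {X A : Type*} [Fintype X] [Fintype A]
variable (γ : ℝ) (P : X → A → X → ℝ) (ν₀ : X → ℝ) (ρ : X → A → ℝ)
variable (hγ0 : 0 < γ) (hγ1 : γ < 1)
  (hP0 : ∀ x a x', 0 ≤ P x a x')
  (hν0 : ∀ x, 0 ≤ ν₀ x)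
  (hρ0 : ∀ x a, 0 ≤ ρ x a) (hρ1 : ∀ x, ∑ a, ρ x a = 1)

include hγ0 hγ1 hP0 hν0 hρ0 in
lemma occ_nonneg (x : X) (a : A) : 0 ≤ occ γ P ν₀ ρ x a := by
  rw [occ_factor]
  exact mul_nonneg (sOcc_nonneg γ P ν₀ ρ hγ0 hγ1 hP0 hν0 hρ0 x) (hρ0 x a)

include hρ1 in
lemma occ_sum (x : X) : ∑ a, occ γ P ν₀ ρ x a = sOcc γ P ν₀ ρ x := by
  rw [Finset.sum_congr rfl fun a _ => occ_factor γ P ν₀ ρ x a, ← Finset.mul_sum, hρ1, mul_one]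

end OccAux

/-- canonical value iterate. -/
noncomputable def VT {X A : Type*} [Fintype X] [Fintype A] (η : ℝ)
    (π Q : ℕ → X → A → ℝ) (k : ℕ) (x : X) : ℝ := lseV η (π (k-1) x) (Q k x)

/-- canonical policy iterate. -/
noncomputable def PT {X A : Type*} [Fintype X] [Fintype A] (η : ℝ)
    (π Q : ℕ → X → A → ℝ) (k : ℕ) (x : X) : A → ℝ := tiltP η (π (k-1) x) (Q k x)

end RAVI


open Classical in
/-- Relative entropy between two (finitely supported) distributions given as functions,
valued in `[0,∞]`, with `KL(p‖q) = ∞` when `p` is not absolutely continuous w.r.t. `q`. -/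
noncomputable def KLd {S : Type*} [Fintype S] (p q : S → ℝ) : ℝ≥0∞ :=
  if ∀ s, q s = 0 → p s = 0 then
    ENNReal.ofReal (∑ s, if p s = 0 then (0 : ℝ) else p s * Real.log (p s / q s))
  else ⊤

/-- The conditional relative entropy `H(π‖π') = Σ_x ν^π(x) KL(π(·|x) ‖ π'(·|x))`, where
`ν^π(x) = Σ_a μ^π(x,a)` is the discounted state occupancy of `π`. -/
noncomputable def condKL {X A : Type*} [Fintype X] [Fintype A]
    (γ : ℝ) (P : X → A → X → ℝ) (ν₀ : X → ℝ) (π π' : X → A → ℝ) : ℝ≥0∞ :=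
  ∑ x, ENNReal.ofReal (∑ a, occ γ P ν₀ π x a) * KLd (π x) (π' x)

/-- Lemma 2 (optimistic planning guarantee of RAVI-UCB).  With `V₀ = 0`, `Q₁ = 0`, and the
regularized value-iteration recursions
`V_k(x) = (1/η) log Σ_a π_{k−1}(a|x) exp(η Q_k(x,a))`,
`π_k(a|x) = π_{k−1}(a|x) exp(η (Q_k(x,a) − V_k(x)))`,
`Q_{k+1}(x,a) = Π_H[r(x,a) + CB_k(x,a) + γ (P̂_k V_k)(x,a)]` for `k = 1, …, K`,
if the nonnegative bonuses `CB_k` are valid,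
`|γ Σ_{x'} (P(x'|x,a) − P̂_k(x'|x,a)) V_k(x')| ≤ CB_k(x,a)`, then for any optimal policy `π*`:
`Σ_{k=1}^K (⟨μ*, r⟩ − ⟨μ^{π_k}, r⟩)
  ≤ 2 Σ_{k=1}^K ⟨μ^{π_k}, CB_k⟩ + 2H + (1/η) H(π*‖π₀) + η H³ K / 2`.
(The inequality is stated in `[0,∞]` since the conditional entropy may be infinite.) -/
theorem stmt_1 {X A : Type*} [Fintype X] [Fintype A] [Nonempty X] [Nonempty A]
    (γ : ℝ) (hγ0 : 0 < γ) (hγ1 : γ < 1) (H : ℝ) (hH : H = 1 / (1 - γ))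
    (P : X → A → X → ℝ) (hP0 : ∀ x a x', 0 ≤ P x a x') (hP1 : ∀ x a, ∑ x', P x a x' = 1)
    (r : X → A → ℝ) (hr0 : ∀ x a, 0 ≤ r x a) (hr1 : ∀ x a, r x a ≤ 1)
    (ν₀ : X → ℝ) (hν0 : ∀ x, 0 ≤ ν₀ x) (hν1 : ∑ x, ν₀ x = 1)
    (K : ℕ) (hK : 1 ≤ K) (η : ℝ) (hη : 0 < η)
    (π : ℕ → X → A → ℝ) (hπ00 : ∀ x a, 0 ≤ π 0 x a) (hπ01 : ∀ x, ∑ a, π 0 x a = 1)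
    (V : ℕ → X → ℝ) (hV0 : ∀ x, V 0 x = 0)
    (Q : ℕ → X → A → ℝ) (hQ1 : ∀ x a, Q 1 x a = 0)
    (Phat : ℕ → X → A → X → ℝ) (CB : ℕ → X → A → ℝ)
    (hCB0 : ∀ k x a, 0 ≤ CB k x a)
    (hV : ∀ k, 1 ≤ k → k ≤ K → ∀ x,
        V k x = (1 / η) * Real.log (∑ a, π (k - 1) x a * Real.exp (η * Q k x a)))
    (hπ : ∀ k, 1 ≤ k → k ≤ K → ∀ x a,
        π k x a = π (k - 1) x a * Real.exp (η * (Q k x a - V k x)))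
    (hQ : ∀ k, 1 ≤ k → k ≤ K → ∀ x a,
        Q (k + 1) x a
          = max (min (r x a + CB k x a + γ * ∑ x', Phat k x a x' * V k x') H) 0)
    (hvalid : ∀ k, 1 ≤ k → k ≤ K → ∀ x a,
        |γ * ∑ x', (P x a x' - Phat k x a x') * V k x'| ≤ CB k x a)
    (πs : X → A → ℝ) (hπs0 : ∀ x a, 0 ≤ πs x a) (hπs1 : ∀ x, ∑ a, πs x a = 1)
    (hopt : ∀ ρ : X → A → ℝ, (∀ x a, 0 ≤ ρ x a) → (∀ x, ∑ a, ρ x a = 1) →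
        ∑ x, ∑ a, occ γ P ν₀ ρ x a * r x a ≤ ∑ x, ∑ a, occ γ P ν₀ πs x a * r x a) :
    ENNReal.ofReal
        (∑ k ∈ Finset.Icc 1 K,
          ((∑ x, ∑ a, occ γ P ν₀ πs x a * r x a)
            - ∑ x, ∑ a, occ γ P ν₀ (π k) x a * r x a))
      ≤ ENNReal.ofReal
          (2 * ∑ k ∈ Finset.Icc 1 K, ∑ x, ∑ a, occ γ P ν₀ (π k) x a * CB k x a
            + 2 * H + η * H ^ 3 * (K : ℝ) / 2)
        + ENNReal.ofReal (1 / η) * condKL γ P ν₀ πs (π 0) := by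
  classical
  obtain ⟨K', rfl⟩ : ∃ K'', K = K'' + 1 := ⟨K - 1, by omega⟩
  have h1γ : 0 < 1 - γ := by linarith
  have hHpos : 0 < H := by rw [hH]; exact one_div_pos.mpr h1γ
  have hH0 : 0 ≤ H := hHpos.le
  have hH1 : 1 ≤ H := by rw [hH, le_div_iff₀ h1γ, one_mul]; linarith
  have hγH : γ * H = H - 1 := by rw [hH]; field_simp; ring
  have hHinv : (1 - γ) * H = 1 := by rw [hH]; field_simp
  -- Q bounds
  have hQb : ∀ k, 1 ≤ k → k ≤ K' + 2 → ∀ x a, 0 ≤ Q k x a ∧ Q k x a ≤ H := by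
    intro k hk1 hk2 x a
    by_cases hk : k = 1
    · subst hk; rw [hQ1 x a]; exact ⟨le_refl 0, hH0⟩
    · obtain ⟨j, rfl, hj1, hjK⟩ : ∃ j, k = j + 1 ∧ 1 ≤ j ∧ j ≤ K' + 1 := ⟨k - 1, by omega⟩
      rw [hQ j hj1 hjK x a]
      exact ⟨le_max_right _ _, max_le (min_le_right _ _) hH0⟩
  -- canonical forms
  have hVt : ∀ k, 1 ≤ k → k ≤ K' + 1 → ∀ x, V k x = RAVI.VT η π Q k x :=
    fun k hk1 hkK x => hV k hk1 hkK x
  have hπt : ∀ k, 1 ≤ k → k ≤ K' + 1 → ∀ x a, π k x a = RAVI.PT η π Q k x a := by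
    intro k hk1 hkK x a
    rw [hπ k hk1 hkK x a, hVt k hk1 hkK x]
    rfl
  -- policies are distributions
  have hpol : ∀ k, k ≤ K' + 1 → (∀ x a, 0 ≤ π k x a) ∧ (∀ x, ∑ a, π k x a = 1) := by
    intro k
    induction k with
    | zero => exact fun _ => ⟨hπ00, hπ01⟩
    | succ n ih =>
      intro hn1
      obtain ⟨hp0, hp1⟩ := ih (by omega)
      have heq : ∀ x a, π (n+1) x a = RAVI.tiltP η (π n x) (Q (n+1) x) a := by
        intro x a
        have := hπt (n+1) (by omega) hn1 x a
        simpa only [RAVI.PT, Nat.add_sub_cancel] using this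
      constructor
      · intro x a; rw [heq x a]
        exact RAVI.tiltP_nonneg η (π n x) (Q (n+1) x) (fun b => hp0 x b) a
      · intro x
        rw [Finset.sum_congr rfl fun a _ => heq x a]
        exact RAVI.tiltP_sum η (π n x) (Q (n+1) x) hη (fun b => hp0 x b) (hp1 x)
          (fun b => (hQb (n+1) (by omega) (by omega) x b).1)
  -- VT and PT facts, valid for k ∈ [1, K'+2]
  have hVTb : ∀ k, 1 ≤ k → k ≤ K' + 2 → ∀ x,
      0 ≤ RAVI.VT η π Q k x ∧ RAVI.VT η π Q k x ≤ H := by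
    intro k hk1 hk2 x
    obtain ⟨hp0, hp1⟩ := hpol (k-1) (by omega)
    constructor
    · exact RAVI.lseV_nonneg η (π (k-1) x) (Q k x) hη (fun b => hp0 x b) (hp1 x)
        (fun b => (hQb k hk1 hk2 x b).1)
    · exact RAVI.lseV_le η H (π (k-1) x) (Q k x) hη hH0 (fun b => hp0 x b) (hp1 x)
        (fun b => (hQb k hk1 hk2 x b).1) (fun b => (hQb k hk1 hk2 x b).2)
  have hPTb : ∀ k, 1 ≤ k → k ≤ K' + 2 → ∀ x,
      (∀ a, 0 ≤ RAVI.PT η π Q k x a) ∧ ∑ a, RAVI.PT η π Q k x a = 1 := by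
    intro k hk1 hk2 x
    obtain ⟨hp0, hp1⟩ := hpol (k-1) (by omega)
    exact ⟨fun a => RAVI.tiltP_nonneg η (π (k-1) x) (Q k x) (fun b => hp0 x b) a,
      RAVI.tiltP_sum η (π (k-1) x) (Q k x) hη (fun b => hp0 x b) (hp1 x)
        (fun b => (hQb k hk1 hk2 x b).1)⟩
  have hPTl1 : ∀ k, 1 ≤ k → k ≤ K' + 2 → ∀ x,
      ∑ a, |RAVI.PT η π Q k x a - π (k-1) x a| ≤ η * H := by
    intro k hk1 hk2 x
    obtain ⟨hp0, hp1⟩ := hpol (k-1) (by omega)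
    exact RAVI.tiltP_l1 η H (π (k-1) x) (Q k x) hη hH0 (fun b => hp0 x b) (hp1 x)
      (fun b => (hQb k hk1 hk2 x b).1) (fun b => (hQb k hk1 hk2 x b).2)
  have hslack : ∀ k, 1 ≤ k → k ≤ K' + 2 → ∀ x,
      RAVI.VT η π Q k x - ∑ a, π (k-1) x a * Q k x a ≤ η * H ^ 2 / 2 := by
    intro k hk1 hk2 x
    obtain ⟨hp0, hp1⟩ := hpol (k-1) (by omega)
    exact RAVI.lseV_slack η H (π (k-1) x) (Q k x) hη hH0 (fun b => hp0 x b) (hp1 x)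
      (fun b => (hQb k hk1 hk2 x b).1) (fun b => (hQb k hk1 hk2 x b).2)
  -- VT 1 = 0, PT 1 = π 0
  have hZ1 : ∀ x, (∑ a, π 0 x a * Real.exp (η * Q 1 x a)) = 1 := by
    intro x
    rw [Finset.sum_congr rfl fun a _ => by rw [hQ1 x a, mul_zero, Real.exp_zero, mul_one]]
    exact hπ01 x
  have hVT1 : ∀ x, RAVI.VT η π Q 1 x = 0 := by
    intro x
    show (1/η) * Real.log (∑ a, π 0 x a * Real.exp (η * Q 1 x a)) = 0
    rw [hZ1 x, Real.log_one, mul_zero]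
  have hPT1 : ∀ x a, RAVI.PT η π Q 1 x a = π 0 x a := by
    intro x a
    show π 0 x a * Real.exp (η * (Q 1 x a - RAVI.lseV η (π 0 x) (Q 1 x))) = π 0 x a
    have hl : RAVI.lseV η (π 0 x) (Q 1 x) = 0 := hVT1 x
    rw [hl, hQ1 x a, sub_zero, mul_zero, Real.exp_zero, mul_one]
  -- support preservation
  have hsupp : ∀ k, k ≤ K' + 1 → ∀ x a, π k x a = 0 ↔ π 0 x a = 0 := by
    intro k
    induction k with
    | zero => exact fun _ x a => Iff.rfl
    | succ n ih =>
      intro hk x a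
      have heq : π (n+1) x a = RAVI.tiltP η (π n x) (Q (n+1) x) a := by
        have := hπt (n+1) (by omega) hk x a
        simpa only [RAVI.PT, Nat.add_sub_cancel] using this
      rw [heq, RAVI.tiltP_eq_zero_iff η (π n x) (Q (n+1) x)
        (fun b => (hpol n (by omega)).1 x b) a]
      exact ih (by omega) x a
  -- optimism and pessimism
  have hVb : ∀ k, 1 ≤ k → k ≤ K' + 1 → ∀ x', 0 ≤ V k x' ∧ V k x' ≤ H := by
    intro k hk1 hkK x'
    rw [hVt k hk1 hkK x']
    exact hVTb k hk1 (by omega) x'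
  have hPVb : ∀ k, 1 ≤ k → k ≤ K' + 1 → ∀ x a,
      0 ≤ (∑ x', P x a x' * V k x') ∧ (∑ x', P x a x' * V k x') ≤ H := by
    intro k hk1 hkK x a
    constructor
    · exact Finset.sum_nonneg fun x' _ => mul_nonneg (hP0 x a x') (hVb k hk1 hkK x').1
    · calc ∑ x', P x a x' * V k x' ≤ ∑ x', P x a x' * H :=
          Finset.sum_le_sum fun x' _ =>
            mul_le_mul_of_nonneg_left (hVb k hk1 hkK x').2 (hP0 x a x')
      _ = H := by rw [← Finset.sum_mul, hP1 x a, one_mul]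
  have hdiffPV : ∀ k x a, γ * ∑ x', (P x a x' - Phat k x a x') * V k x'
      = γ * (∑ x', P x a x' * V k x') - γ * (∑ x', Phat k x a x' * V k x') := by
    intro k x a
    rw [Finset.sum_congr rfl fun x' _ => sub_mul (P x a x') (Phat k x a x') (V k x'),
      Finset.sum_sub_distrib, mul_sub]
  have hopt2 : ∀ k, 1 ≤ k → k ≤ K' + 1 → ∀ x a,
      r x a + γ * ∑ x', P x a x' * V k x' ≤ Q (k+1) x a := by
    intro k hk1 hkK x a
    rw [hQ k hk1 hkK x a]
    have hv := abs_le.mp (hvalid k hk1 hkK x a)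
    rw [hdiffPV k x a] at hv
    have hb := hPVb k hk1 hkK x a
    have hz2 : r x a + γ * ∑ x', P x a x' * V k x' ≤ H := by
      have h2 : γ * (∑ x', P x a x' * V k x') ≤ γ * H :=
        mul_le_mul_of_nonneg_left hb.2 hγ0.le
      have := hr1 x a
      linarith [hγH]
    have hy : r x a + γ * ∑ x', P x a x' * V k x'
        ≤ r x a + CB k x a + γ * ∑ x', Phat k x a x' * V k x' := by linarith [hv.2]
    exact le_trans (le_min hy hz2) (le_max_left _ _)
  have hpes : ∀ k, 1 ≤ k → k ≤ K' + 1 → ∀ x a,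
      Q (k+1) x a ≤ r x a + 2 * CB k x a + γ * ∑ x', P x a x' * V k x' := by
    intro k hk1 hkK x a
    rw [hQ k hk1 hkK x a]
    have hv := abs_le.mp (hvalid k hk1 hkK x a)
    rw [hdiffPV k x a] at hv
    have hb := hPVb k hk1 hkK x a
    have htgt : 0 ≤ r x a + 2 * CB k x a + γ * ∑ x', P x a x' * V k x' := by
      have := hr0 x a; have := hCB0 k x a
      have : 0 ≤ γ * ∑ x', P x a x' * V k x' := mul_nonneg hγ0.le hb.1
      linarith
    refine max_le (le_trans (min_le_left _ _) ?_) htgt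
    linarith [hv.1]
  -- comparator occupancy facts
  have hνs0 : ∀ x, 0 ≤ RAVI.sOcc γ P ν₀ πs x :=
    fun x => RAVI.sOcc_nonneg γ P ν₀ πs hγ0 hγ1 hP0 hν0 hπs0 x
  have hνs1 : ∑ x, RAVI.sOcc γ P ν₀ πs x = 1 :=
    RAVI.sOcc_sum γ P ν₀ πs hγ0 hγ1 hP0 hP1 hν0 hν1 hπs0 hπs1
  by_cases hac : ∀ x, 0 < RAVI.sOcc γ P ν₀ πs x → ∀ a, π 0 x a = 0 → πs x a = 0
  case neg =>
    -- conditional KL is infinite, RHS = ⊤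
    push_neg at hac
    obtain ⟨x₀, hx₀, a₀, ha₀, hane⟩ := hac
    have hKLd : KLd (πs x₀) (π 0 x₀) = ⊤ := by
      rw [KLd, if_neg]
      push_neg
      exact ⟨a₀, ha₀, hane⟩
    have hterm : ENNReal.ofReal (∑ a, occ γ P ν₀ πs x₀ a) * KLd (πs x₀) (π 0 x₀) = ⊤ := by
      rw [hKLd, ENNReal.mul_top]
      rw [RAVI.occ_sum γ P ν₀ πs hπs1 x₀]
      exact (ENNReal.ofReal_pos.mpr hx₀).ne'
    have hcond : condKL γ P ν₀ πs (π 0) = ⊤ := by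
      rw [condKL]
      exact ENNReal.sum_eq_top.mpr ⟨x₀, Finset.mem_univ x₀, hterm⟩
    rw [hcond, ENNReal.mul_top (by
      simp only [ne_eq, ENNReal.ofReal_eq_zero, not_le]
      positivity), add_top]
    exact le_top
  case pos =>
    -- mirror descent identity
    have hMD : ∀ k, 1 ≤ k → k ≤ K' + 1 → ∀ x, 0 < RAVI.sOcc γ P ν₀ πs x →
        (∑ a, πs x a * Q (k+1) x a) - RAVI.VT η π Q (k+1) x
          = (1/η) * (RAVI.klR (πs x) (π k x) - RAVI.klR (πs x) (RAVI.PT η π Q (k+1) x)) := by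
      intro k hk1 hkK x hx
      have hacx : ∀ a, π k x a = 0 → πs x a = 0 :=
        fun a h => hac x hx a ((hsupp k hkK x a).mp h)
      exact RAVI.md_identity η hη (π k x) (πs x) (Q (k+1) x)
        (fun b => (hpol k hkK).1 x b) (hπs1 x) hacx
    -- the per-round regret bound
    have step : ∀ k, 1 ≤ k → k ≤ K' + 1 →
        (∑ x, ∑ a, occ γ P ν₀ πs x a * r x a)
          - (∑ x, ∑ a, occ γ P ν₀ (π k) x a * r x a)
        ≤ ((∑ x, RAVI.sOcc γ P ν₀ πs x * RAVI.VT η π Q (k+1) x)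
              - (∑ x, RAVI.sOcc γ P ν₀ πs x * RAVI.VT η π Q k x))
          + (1/η) * ((∑ x, RAVI.sOcc γ P ν₀ πs x * RAVI.klR (πs x) (RAVI.PT η π Q k x))
              - (∑ x, RAVI.sOcc γ P ν₀ πs x * RAVI.klR (πs x) (RAVI.PT η π Q (k+1) x)))
          + ((∑ x, RAVI.sOcc γ P ν₀ (π k) x * RAVI.VT η π Q k x)
              - (∑ x, RAVI.sOcc γ P ν₀ (π k) x * RAVI.VT η π Q (k+1) x))
          + (2 * (∑ x, ∑ a, occ γ P ν₀ (π k) x a * CB k x a) + η * H ^ 2 / 2) := by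
      intro k hk1 hkK
      obtain ⟨hπk0, hπk1⟩ := hpol k hkK
      have hνk0 : ∀ x, 0 ≤ RAVI.sOcc γ P ν₀ (π k) x :=
        fun x => RAVI.sOcc_nonneg γ P ν₀ (π k) hγ0 hγ1 hP0 hν0 hπk0 x
      have hνk1 : ∑ x, RAVI.sOcc γ P ν₀ (π k) x = 1 :=
        RAVI.sOcc_sum γ P ν₀ (π k) hγ0 hγ1 hP0 hP1 hν0 hν1 hπk0 hπk1
      -- A-part
      have a1 : ∑ x, ∑ a, occ γ P ν₀ πs x a * (r x a + γ * ∑ x', P x a x' * V k x')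
          = (∑ x, ∑ a, occ γ P ν₀ πs x a * r x a)
            + γ * (∑ x, ∑ a, occ γ P ν₀ πs x a * (∑ x', P x a x' * V k x')) := by
        rw [Finset.mul_sum, ← Finset.sum_add_distrib]
        refine Finset.sum_congr rfl fun x _ => ?_
        rw [Finset.mul_sum, ← Finset.sum_add_distrib]
        refine Finset.sum_congr rfl fun a _ => ?_
        ring
      have a2 : ∑ x, ∑ a, occ γ P ν₀ πs x a * (r x a + γ * ∑ x', P x a x' * V k x')
          ≤ ∑ x, ∑ a, occ γ P ν₀ πs x a * Q (k+1) x a := by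
        refine Finset.sum_le_sum fun x _ => Finset.sum_le_sum fun a _ => ?_
        exact mul_le_mul_of_nonneg_left (hopt2 k hk1 hkK x a)
          (RAVI.occ_nonneg γ P ν₀ πs hγ0 hγ1 hP0 hν0 hπs0 x a)
      have a3 : γ * (∑ x, ∑ a, occ γ P ν₀ πs x a * (∑ x', P x a x' * V k x'))
          = (∑ x, RAVI.sOcc γ P ν₀ πs x * RAVI.VT η π Q k x)
            - (1-γ) * (∑ x, ν₀ x * RAVI.VT η π Q k x) := by
        have hff := RAVI.sOcc_flowF γ P ν₀ πs hγ0 hγ1 hP0 hP1 hν0 hν1 hπs0 hπs1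
          (fun x => RAVI.VT η π Q k x)
        rw [← hff]
        congr 1
        refine Finset.sum_congr rfl fun x _ => Finset.sum_congr rfl fun a _ => ?_
        rw [RAVI.occ_factor]
        congr 1
        exact Finset.sum_congr rfl fun x' _ => by rw [hVt k hk1 hkK x']
      have a4 : ∑ x, ∑ a, occ γ P ν₀ πs x a * Q (k+1) x a
          = ∑ x, RAVI.sOcc γ P ν₀ πs x * (∑ a, πs x a * Q (k+1) x a) := by
        refine Finset.sum_congr rfl fun x _ => ?_
        rw [Finset.mul_sum]
        refine Finset.sum_congr rfl fun a _ => ?_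
        rw [RAVI.occ_factor]; ring
      have a5 : ∑ x, RAVI.sOcc γ P ν₀ πs x * (∑ a, πs x a * Q (k+1) x a)
          = (∑ x, RAVI.sOcc γ P ν₀ πs x * RAVI.VT η π Q (k+1) x)
            + (1/η) * ((∑ x, RAVI.sOcc γ P ν₀ πs x * RAVI.klR (πs x) (RAVI.PT η π Q k x))
              - (∑ x, RAVI.sOcc γ P ν₀ πs x * RAVI.klR (πs x) (RAVI.PT η π Q (k+1) x))) := by
        have e : ∀ x ∈ Finset.univ, RAVI.sOcc γ P ν₀ πs x * (∑ a, πs x a * Q (k+1) x a)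
            = RAVI.sOcc γ P ν₀ πs x * RAVI.VT η π Q (k+1) x
              + (1/η) * (RAVI.sOcc γ P ν₀ πs x * RAVI.klR (πs x) (RAVI.PT η π Q k x)
                - RAVI.sOcc γ P ν₀ πs x * RAVI.klR (πs x) (RAVI.PT η π Q (k+1) x)) := by
          intro x _
          rcases lt_or_eq_of_le (hνs0 x) with hx | hx
          · have hid := hMD k hk1 hkK x hx
            have hklr : RAVI.klR (πs x) (π k x) = RAVI.klR (πs x) (RAVI.PT η π Q k x) :=
              RAVI.klR_congr _ _ _ (fun a => by rw [hπt k hk1 hkK x a])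
            rw [← hklr,
              show (∑ a, πs x a * Q (k+1) x a)
                = RAVI.VT η π Q (k+1) x + (1/η) * (RAVI.klR (πs x) (π k x)
                  - RAVI.klR (πs x) (RAVI.PT η π Q (k+1) x)) from by linarith [hid]]
            ring
          · rw [← hx]; ring
        rw [Finset.sum_congr rfl e, Finset.sum_add_distrib]
        congr 1
        rw [mul_sub, Finset.mul_sum, Finset.mul_sum, ← Finset.sum_sub_distrib]
        exact Finset.sum_congr rfl fun x _ => by ring
      -- E-part
      have b1 : ∑ x, ∑ a, occ γ P ν₀ (π k) x a * Q (k+1) x a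
          ≤ ∑ x, ∑ a, occ γ P ν₀ (π k) x a
              * (r x a + 2 * CB k x a + γ * ∑ x', P x a x' * V k x') := by
        refine Finset.sum_le_sum fun x _ => Finset.sum_le_sum fun a _ => ?_
        exact mul_le_mul_of_nonneg_left (hpes k hk1 hkK x a)
          (RAVI.occ_nonneg γ P ν₀ (π k) hγ0 hγ1 hP0 hν0 hπk0 x a)
      have b2 : ∑ x, ∑ a, occ γ P ν₀ (π k) x a * Q (k+1) x a
          = ∑ x, RAVI.sOcc γ P ν₀ (π k) x * (∑ a, π k x a * Q (k+1) x a) := by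
        refine Finset.sum_congr rfl fun x _ => ?_
        rw [Finset.mul_sum]
        refine Finset.sum_congr rfl fun a _ => ?_
        rw [RAVI.occ_factor]; ring
      have b3 : (∑ x, RAVI.sOcc γ P ν₀ (π k) x * RAVI.VT η π Q (k+1) x) - η * H ^ 2 / 2
          ≤ ∑ x, RAVI.sOcc γ P ν₀ (π k) x * (∑ a, π k x a * Q (k+1) x a) := by
        have hs : ∀ x, RAVI.VT η π Q (k+1) x - ∑ a, π k x a * Q (k+1) x a ≤ η * H ^ 2 / 2 := by
          intro x
          have := hslack (k+1) (by omega) (by omega) x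
          simpa only [Nat.add_sub_cancel] using this
        have hle : ∑ x, RAVI.sOcc γ P ν₀ (π k) x * (RAVI.VT η π Q (k+1) x - η * H ^ 2 / 2)
            ≤ ∑ x, RAVI.sOcc γ P ν₀ (π k) x * (∑ a, π k x a * Q (k+1) x a) := by
          refine Finset.sum_le_sum fun x _ => ?_
          exact mul_le_mul_of_nonneg_left (by linarith [hs x]) (hνk0 x)
        have hexp : ∑ x, RAVI.sOcc γ P ν₀ (π k) x * (RAVI.VT η π Q (k+1) x - η * H ^ 2 / 2)
            = (∑ x, RAVI.sOcc γ P ν₀ (π k) x * RAVI.VT η π Q (k+1) x) - η * H ^ 2 / 2 := by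
          rw [Finset.sum_congr rfl (fun x _ => by ring :
            ∀ x ∈ Finset.univ, RAVI.sOcc γ P ν₀ (π k) x * (RAVI.VT η π Q (k+1) x - η * H ^ 2 / 2)
              = RAVI.sOcc γ P ν₀ (π k) x * RAVI.VT η π Q (k+1) x
                - RAVI.sOcc γ P ν₀ (π k) x * (η * H ^ 2 / 2)),
            Finset.sum_sub_distrib, ← Finset.sum_mul, hνk1, one_mul]
        linarith [hle, hexp]
      have b4 : ∑ x, ∑ a, occ γ P ν₀ (π k) x a
            * (r x a + 2 * CB k x a + γ * ∑ x', P x a x' * V k x')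
          = (∑ x, ∑ a, occ γ P ν₀ (π k) x a * r x a)
            + 2 * (∑ x, ∑ a, occ γ P ν₀ (π k) x a * CB k x a)
            + ((∑ x, RAVI.sOcc γ P ν₀ (π k) x * RAVI.VT η π Q k x)
              - (1-γ) * (∑ x, ν₀ x * RAVI.VT η π Q k x)) := by
        have b4a : ∑ x, ∑ a, occ γ P ν₀ (π k) x a
              * (r x a + 2 * CB k x a + γ * ∑ x', P x a x' * V k x')
            = (∑ x, ∑ a, occ γ P ν₀ (π k) x a * r x a)
              + 2 * (∑ x, ∑ a, occ γ P ν₀ (π k) x a * CB k x a)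
              + γ * (∑ x, ∑ a, occ γ P ν₀ (π k) x a * (∑ x', P x a x' * V k x')) := by
          rw [Finset.mul_sum, Finset.mul_sum, ← Finset.sum_add_distrib, ← Finset.sum_add_distrib]
          refine Finset.sum_congr rfl fun x _ => ?_
          rw [Finset.mul_sum, Finset.mul_sum, ← Finset.sum_add_distrib, ← Finset.sum_add_distrib]
          refine Finset.sum_congr rfl fun a _ => ?_
          ring
        have b4b : γ * (∑ x, ∑ a, occ γ P ν₀ (π k) x a * (∑ x', P x a x' * V k x'))
            = (∑ x, RAVI.sOcc γ P ν₀ (π k) x * RAVI.VT η π Q k x)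
              - (1-γ) * (∑ x, ν₀ x * RAVI.VT η π Q k x) := by
          have hff := RAVI.sOcc_flowF γ P ν₀ (π k) hγ0 hγ1 hP0 hP1 hν0 hν1 hπk0 hπk1
            (fun x => RAVI.VT η π Q k x)
          rw [← hff]
          congr 1
          refine Finset.sum_congr rfl fun x _ => Finset.sum_congr rfl fun a _ => ?_
          rw [RAVI.occ_factor]
          congr 1
          exact Finset.sum_congr rfl fun x' _ => by rw [hVt k hk1 hkK x']
        rw [b4a, b4b]
      linarith [a1, a2, a3, a4, a5, b1, b2, b3, b4]
    -- abbreviations are spelled out; sum the per-round bounds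
    have hcard : (Finset.Icc 1 (K'+1)).card = K' + 1 := by simp
    have hcard' : (Finset.Icc 1 K').card = K' := by simp
    have hsum1 : ∑ k ∈ Finset.Icc 1 (K'+1),
        ((∑ x, ∑ a, occ γ P ν₀ πs x a * r x a)
          - (∑ x, ∑ a, occ γ P ν₀ (π k) x a * r x a))
        ≤ ∑ k ∈ Finset.Icc 1 (K'+1),
          (((∑ x, RAVI.sOcc γ P ν₀ πs x * RAVI.VT η π Q (k+1) x)
              - (∑ x, RAVI.sOcc γ P ν₀ πs x * RAVI.VT η π Q k x))
            + (1/η) * ((∑ x, RAVI.sOcc γ P ν₀ πs x * RAVI.klR (πs x) (RAVI.PT η π Q k x))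
                - (∑ x, RAVI.sOcc γ P ν₀ πs x * RAVI.klR (πs x) (RAVI.PT η π Q (k+1) x)))
            + ((∑ x, RAVI.sOcc γ P ν₀ (π k) x * RAVI.VT η π Q k x)
                - (∑ x, RAVI.sOcc γ P ν₀ (π k) x * RAVI.VT η π Q (k+1) x))
            + (2 * (∑ x, ∑ a, occ γ P ν₀ (π k) x a * CB k x a) + η * H ^ 2 / 2)) :=
      Finset.sum_le_sum fun k hk =>
        step k (Finset.mem_Icc.mp hk).1 (Finset.mem_Icc.mp hk).2
    rw [Finset.sum_add_distrib, Finset.sum_add_distrib, Finset.sum_add_distrib] at hsum1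
    -- T1: telescoping of the comparator value terms
    have hT1 : ∑ k ∈ Finset.Icc 1 (K'+1),
        ((∑ x, RAVI.sOcc γ P ν₀ πs x * RAVI.VT η π Q (k+1) x)
          - (∑ x, RAVI.sOcc γ P ν₀ πs x * RAVI.VT η π Q k x))
        = (∑ x, RAVI.sOcc γ P ν₀ πs x * RAVI.VT η π Q (K'+1+1) x)
          - (∑ x, RAVI.sOcc γ P ν₀ πs x * RAVI.VT η π Q 1 x) :=
      RAVI.sum_Icc_telescope' (fun j => ∑ x, RAVI.sOcc γ P ν₀ πs x * RAVI.VT η π Q j x) (K'+1)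
    have hF1 : (∑ x, RAVI.sOcc γ P ν₀ πs x * RAVI.VT η π Q 1 x) = 0 :=
      Finset.sum_eq_zero fun x _ => by rw [hVT1 x, mul_zero]
    have hFK : (∑ x, RAVI.sOcc γ P ν₀ πs x * RAVI.VT η π Q (K'+1+1) x) ≤ H := by
      calc ∑ x, RAVI.sOcc γ P ν₀ πs x * RAVI.VT η π Q (K'+1+1) x
          ≤ ∑ x, RAVI.sOcc γ P ν₀ πs x * H :=
            Finset.sum_le_sum fun x _ => mul_le_mul_of_nonneg_left
              (hVTb (K'+1+1) (by omega) (by omega) x).2 (hνs0 x)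
      _ = H := by rw [← Finset.sum_mul, hνs1, one_mul]
    -- T2: telescoping of the KL terms
    have hT2 : ∑ k ∈ Finset.Icc 1 (K'+1),
        (1/η) * ((∑ x, RAVI.sOcc γ P ν₀ πs x * RAVI.klR (πs x) (RAVI.PT η π Q k x))
          - (∑ x, RAVI.sOcc γ P ν₀ πs x * RAVI.klR (πs x) (RAVI.PT η π Q (k+1) x)))
        = (1/η) * ((∑ x, RAVI.sOcc γ P ν₀ πs x * RAVI.klR (πs x) (RAVI.PT η π Q 1 x))
          - (∑ x, RAVI.sOcc γ P ν₀ πs x * RAVI.klR (πs x) (RAVI.PT η π Q (K'+1+1) x))) := by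
      rw [← Finset.mul_sum]
      congr 1
      exact RAVI.sum_Icc_telescope
        (fun j => ∑ x, RAVI.sOcc γ P ν₀ πs x * RAVI.klR (πs x) (RAVI.PT η π Q j x)) (K'+1)
    have hG1 : (∑ x, RAVI.sOcc γ P ν₀ πs x * RAVI.klR (πs x) (RAVI.PT η π Q 1 x))
        = ∑ x, RAVI.sOcc γ P ν₀ πs x * RAVI.klR (πs x) (π 0 x) :=
      Finset.sum_congr rfl fun x _ => by
        rw [RAVI.klR_congr (πs x) (RAVI.PT η π Q 1 x) (π 0 x) (fun a => hPT1 x a)]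
    have hGK : 0 ≤ ∑ x, RAVI.sOcc γ P ν₀ πs x * RAVI.klR (πs x) (RAVI.PT η π Q (K'+1+1) x) := by
      refine Finset.sum_nonneg fun x _ => ?_
      rcases lt_or_eq_of_le (hνs0 x) with hx | hx
      · refine mul_nonneg (hνs0 x) ?_
        refine RAVI.klR_nonneg (πs x) (RAVI.PT η π Q (K'+1+1) x)
          (fun a => hπs0 x a) (hπs1 x)
          (fun a => (hPTb (K'+1+1) (by omega) (by omega) x).1 a)
          (le_of_eq (hPTb (K'+1+1) (by omega) (by omega) x).2) ?_
        intro a hza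
        have hz : π (K'+1+1-1) x a = 0 :=
          (RAVI.tiltP_eq_zero_iff η (π (K'+1+1-1) x) (Q (K'+1+1) x)
            (fun b => (hpol (K'+1+1-1) (by omega)).1 x b) a).mp hza
        simp only [Nat.add_sub_cancel] at hz
        exact hac x hx a ((hsupp (K'+1) le_rfl x a).mp hz)
      · rw [← hx, zero_mul]
    -- T3: evaluation drift terms
    have hshift : ∑ k ∈ Finset.Icc 1 (K'+1),
        ((∑ x, RAVI.sOcc γ P ν₀ (π k) x * RAVI.VT η π Q k x)
          - (∑ x, RAVI.sOcc γ P ν₀ (π k) x * RAVI.VT η π Q (k+1) x))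
        = (∑ x, RAVI.sOcc γ P ν₀ (π 1) x * RAVI.VT η π Q 1 x)
          - (∑ x, RAVI.sOcc γ P ν₀ (π (K'+1)) x * RAVI.VT η π Q (K'+1+1) x)
          + ∑ k ∈ Finset.Icc 1 K',
            ((∑ x, RAVI.sOcc γ P ν₀ (π (k+1)) x * RAVI.VT η π Q (k+1) x)
              - (∑ x, RAVI.sOcc γ P ν₀ (π k) x * RAVI.VT η π Q (k+1) x)) :=
      RAVI.sum_Icc_shift
        (fun j => ∑ x, RAVI.sOcc γ P ν₀ (π j) x * RAVI.VT η π Q j x)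
        (fun j => ∑ x, RAVI.sOcc γ P ν₀ (π j) x * RAVI.VT η π Q (j+1) x) K'
    have hg1 : (∑ x, RAVI.sOcc γ P ν₀ (π 1) x * RAVI.VT η π Q 1 x) = 0 :=
      Finset.sum_eq_zero fun x _ => by rw [hVT1 x, mul_zero]
    have hhK : 0 ≤ ∑ x, RAVI.sOcc γ P ν₀ (π (K'+1)) x * RAVI.VT η π Q (K'+1+1) x :=
      Finset.sum_nonneg fun x _ => mul_nonneg
        (RAVI.sOcc_nonneg γ P ν₀ (π (K'+1)) hγ0 hγ1 hP0 hν0 (hpol (K'+1) le_rfl).1 x)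
        (hVTb (K'+1+1) (by omega) (by omega) x).1
    have hmid : ∀ k ∈ Finset.Icc 1 K',
        (∑ x, RAVI.sOcc γ P ν₀ (π (k+1)) x * RAVI.VT η π Q (k+1) x)
          - (∑ x, RAVI.sOcc γ P ν₀ (π k) x * RAVI.VT η π Q (k+1) x)
        ≤ η * γ * H ^ 3 / 2 := by
      intro k hk
      obtain ⟨hk1, hkK'⟩ := Finset.mem_Icc.mp hk
      obtain ⟨hπk0, hπk1⟩ := hpol k (by omega)
      obtain ⟨hπk0', hπk1'⟩ := hpol (k+1) (by omega)
      have hΔ : (∑ x, RAVI.sOcc γ P ν₀ (π (k+1)) x * RAVI.VT η π Q (k+1) x)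
          - (∑ x, RAVI.sOcc γ P ν₀ (π k) x * RAVI.VT η π Q (k+1) x)
          = ∑ x, (RAVI.sOcc γ P ν₀ (π (k+1)) x - RAVI.sOcc γ P ν₀ (π k) x)
              * RAVI.VT η π Q (k+1) x := by
        rw [← Finset.sum_sub_distrib]
        exact Finset.sum_congr rfl fun x _ => by ring
      rw [hΔ]
      have hνsum : ∑ x, RAVI.sOcc γ P ν₀ (π (k+1)) x = ∑ x, RAVI.sOcc γ P ν₀ (π k) x := by
        rw [RAVI.sOcc_sum γ P ν₀ (π (k+1)) hγ0 hγ1 hP0 hP1 hν0 hν1 hπk0' hπk1',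
          RAVI.sOcc_sum γ P ν₀ (π k) hγ0 hγ1 hP0 hP1 hν0 hν1 hπk0 hπk1]
      have hpair := RAVI.pairing (RAVI.sOcc γ P ν₀ (π (k+1))) (RAVI.sOcc γ P ν₀ (π k))
        (fun x => RAVI.VT η π Q (k+1) x) 0 H hνsum
        (fun x => ⟨(hVTb (k+1) (by omega) (by omega) x).1,
          (hVTb (k+1) (by omega) (by omega) x).2⟩)
      refine le_trans hpair ?_
      have hc : ∀ x, ∑ a, |π (k+1) x a - π k x a| ≤ η * H := by
        intro x
        have h1 := hPTl1 (k+1) (by omega) (by omega) x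
        simp only [Nat.add_sub_cancel] at h1
        calc ∑ a, |π (k+1) x a - π k x a|
            = ∑ a, |RAVI.PT η π Q (k+1) x a - π k x a| :=
              Finset.sum_congr rfl fun a _ => by
                rw [hπt (k+1) (by omega) (by omega) x a]
        _ ≤ η * H := h1
      have hpert := RAVI.sOcc_perturb γ P ν₀ (π k) (π (k+1)) hγ0 hγ1 hP0 hP1 hν0 hν1
        hπk0 hπk1 hπk0' hπk1' (η * H) hc
      have h2 : (∑ x, |RAVI.sOcc γ P ν₀ (π (k+1)) x - RAVI.sOcc γ P ν₀ (π k) x|)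
          * ((H - 0) / 2) ≤ (γ * (η * H) / (1 - γ)) * ((H - 0) / 2) :=
        mul_le_mul_of_nonneg_right hpert (by linarith)
      refine le_trans h2 ?_
      have heq2 : η * γ * H ^ 3 / 2 * (1 - γ) = γ * (η * H) * ((H - 0) / 2) := by
        linear_combination (η * γ * H ^ 2 / 2) * hHinv
      rw [div_mul_eq_mul_div, div_le_iff₀ h1γ]
      linarith [heq2]
    have hT3sum : ∑ k ∈ Finset.Icc 1 K',
        ((∑ x, RAVI.sOcc γ P ν₀ (π (k+1)) x * RAVI.VT η π Q (k+1) x)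
          - (∑ x, RAVI.sOcc γ P ν₀ (π k) x * RAVI.VT η π Q (k+1) x))
        ≤ (K' : ℝ) * (η * γ * H ^ 3 / 2) := by
      calc ∑ k ∈ Finset.Icc 1 K',
          ((∑ x, RAVI.sOcc γ P ν₀ (π (k+1)) x * RAVI.VT η π Q (k+1) x)
            - (∑ x, RAVI.sOcc γ P ν₀ (π k) x * RAVI.VT η π Q (k+1) x))
          ≤ ∑ k ∈ Finset.Icc 1 K', (η * γ * H ^ 3 / 2) := Finset.sum_le_sum hmid
      _ = (K' : ℝ) * (η * γ * H ^ 3 / 2) := by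
          rw [Finset.sum_const, hcard', nsmul_eq_mul]
    -- T4: the bonus terms
    have hT4 : ∑ k ∈ Finset.Icc 1 (K'+1),
        (2 * (∑ x, ∑ a, occ γ P ν₀ (π k) x a * CB k x a) + η * H ^ 2 / 2)
        = 2 * (∑ k ∈ Finset.Icc 1 (K'+1), ∑ x, ∑ a, occ γ P ν₀ (π k) x a * CB k x a)
          + ((K' : ℝ) + 1) * (η * H ^ 2 / 2) := by
      rw [Finset.sum_add_distrib, ← Finset.mul_sum, Finset.sum_const, hcard, nsmul_eq_mul]
      push_cast
      ring
    -- the key real inequality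
    have key : ∑ k ∈ Finset.Icc 1 (K'+1),
        ((∑ x, ∑ a, occ γ P ν₀ πs x a * r x a)
          - (∑ x, ∑ a, occ γ P ν₀ (π k) x a * r x a))
        ≤ (2 * (∑ k ∈ Finset.Icc 1 (K'+1), ∑ x, ∑ a, occ γ P ν₀ (π k) x a * CB k x a)
            + 2 * H + η * H ^ 3 * ((K' + 1 : ℕ) : ℝ) / 2)
          + (1/η) * (∑ x, RAVI.sOcc γ P ν₀ πs x * RAVI.klR (πs x) (π 0 x)) := by
      have hη1 : (0:ℝ) ≤ 1/η := by positivity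
      have hT2le : (1/η) * ((∑ x, RAVI.sOcc γ P ν₀ πs x * RAVI.klR (πs x) (RAVI.PT η π Q 1 x))
          - (∑ x, RAVI.sOcc γ P ν₀ πs x * RAVI.klR (πs x) (RAVI.PT η π Q (K'+1+1) x)))
          ≤ (1/η) * (∑ x, RAVI.sOcc γ P ν₀ πs x * RAVI.klR (πs x) (π 0 x)) := by
        rw [hG1]
        refine mul_le_mul_of_nonneg_left ?_ hη1
        linarith [hGK]
      have hcast : ((K' + 1 : ℕ) : ℝ) = (K' : ℝ) + 1 := by push_cast; ring
      have hnum : (K' : ℝ) * (η * γ * H ^ 3 / 2) + ((K' : ℝ) + 1) * (η * H ^ 2 / 2)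
          ≤ H + η * H ^ 3 * ((K' + 1 : ℕ) : ℝ) / 2 := by
        rw [hcast]
        have heq3 : H + η * H ^ 3 * ((K' : ℝ) + 1) / 2
            - ((K' : ℝ) * (η * γ * H ^ 3 / 2) + ((K' : ℝ) + 1) * (η * H ^ 2 / 2))
            = H + η * γ * H ^ 3 / 2 := by
          linear_combination (-((K' : ℝ) + 1) * (η / 2) * H ^ 2) * hγH
        have h30 : 0 ≤ η * γ * H ^ 3 / 2 :=
          div_nonneg (mul_nonneg (mul_nonneg hη.le hγ0.le) (pow_nonneg hH0 3)) (by norm_num)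
        linarith [heq3, h30, hHpos]
      set_option maxHeartbeats 1000000 in
      linarith [hsum1, hT1, hT2, hshift, hT4, hF1, hg1, hFK, hhK, hT2le, hT3sum, hnum]
    -- pass to extended reals
    have hterm0 : ∀ x, 0 ≤ RAVI.sOcc γ P ν₀ πs x * RAVI.klR (πs x) (π 0 x) := by
      intro x
      rcases lt_or_eq_of_le (hνs0 x) with hx | hx
      · refine mul_nonneg (hνs0 x) ?_
        exact RAVI.klR_nonneg (πs x) (π 0 x) (fun a => hπs0 x a) (hπs1 x)
          (fun a => hπ00 x a) (le_of_eq (hπ01 x)) (hac x hx)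
      · rw [← hx, zero_mul]
    refine le_trans (ENNReal.ofReal_le_ofReal key) ?_
    refine le_trans ENNReal.ofReal_add_le ?_
    refine add_le_add le_rfl ?_
    rw [ENNReal.ofReal_mul (by positivity : (0:ℝ) ≤ 1/η)]
    refine mul_le_mul_right ?_ _
    rw [ENNReal.ofReal_sum_of_nonneg (fun x _ => hterm0 x), condKL]
    refine Finset.sum_le_sum fun x _ => ?_
    rcases lt_or_eq_of_le (hνs0 x) with hx | hx
    · rw [ENNReal.ofReal_mul (hνs0 x), RAVI.occ_sum γ P ν₀ πs hπs1 x]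
      refine mul_le_mul_right ?_ _
      have hkld : KLd (πs x) (π 0 x) = ENNReal.ofReal (RAVI.klR (πs x) (π 0 x)) := by
        rw [KLd, if_pos (hac x hx)]
        rfl
      rw [hkld]
    · rw [← hx, zero_mul, ENNReal.ofReal_zero]
      exact zero_le
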